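/- arXiv:2003.13603 — 3 statements merged into one kernel-verified Lean document; each statement's English description precedes it below -/
import Mathlib

section
/- Σ_{m≥0} A_m/(2mn+1) = √π · Γ(1 + 1/(2n)) / Γ(1/2 + 1/(2n)) = K_n, and Σ_{m≥0} A_m(n−1)/(n(2m+1)−1) = √π · Γ(3/2 − 1/(2n)) / Γ(1 − 1/(2n)) = (n−1)·tan(π/(2n))·K_n. In other words, H_n(1) = K_n and G_n(1) = (n−1) tan(π/(2n)) K_n. -/
open Real

noncomputable def A (m : ℕ) : ℝ := (Nat.centralBinom m : ℝ) / 4 ^ m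

noncomputable def c (n m : ℕ) : ℝ := A m / (2 * m * n + 1)

noncomputable def d (n m : ℕ) : ℝ := A m * ((n : ℝ) - 1) / ((n : ℝ) * (2 * m + 1) - 1)

noncomputable def H (n : ℕ) (z : ℂ) : ℂ := ∑' m : ℕ, (c n m : ℂ) * z ^ m

noncomputable def G (n : ℕ) (z : ℂ) : ℂ := ∑' m : ℕ, (d n m : ℂ) * z ^ m

noncomputable def hh (n : ℕ) (z : ℂ) : ℂ := ∑' m : ℕ, (c n m : ℂ) * z ^ (2 * m * n + 1)

noncomputable def gg (n : ℕ) (z : ℂ) : ℂ :=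
  (1 / ((n : ℂ) - 1)) * ∑' m : ℕ, (d n m : ℂ) * z ^ (2 * m * n + n - 1)

noncomputable def f (n : ℕ) (β : ℝ) (z : ℂ) : ℂ :=
  Complex.exp (Complex.I * β / 2) * hh n z +
    Complex.exp (-(Complex.I * β / 2)) * (starRingEnd ℂ) (gg n z)

noncomputable def K (n : ℕ) : ℝ :=
  Real.sqrt π * Real.Gamma (1 + 1 / (2 * n)) / Real.Gamma (1 / 2 + 1 / (2 * n))

/-! ### Auxiliary development -/

section Aux

open Finset

lemma A_zero : A 0 = 1 := by simp [A]

lemma A_nonneg (m : ℕ) : 0 ≤ A m := by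
  unfold A; positivity

lemma A_rec (k : ℕ) : (2*k+2 : ℝ) * A (k+1) = (2*k+1) * A k := by
  have h := Nat.succ_mul_centralBinom_succ k
  have h' : ((k:ℝ) + 1) * ((k+1).centralBinom : ℝ) = 2 * (2 * k + 1) * (k.centralBinom : ℝ) := by
    exact_mod_cast congrArg (fun x : ℕ => (x : ℝ)) h
  simp only [A]
  have h4 : (4:ℝ) ^ (k+1) = 4 * 4 ^ k := by ring
  have h4p : (0:ℝ) < 4 ^ k := by positivity
  field_simp [h4]
  linear_combination (2 * (4:ℝ)^k) * h'

lemma A_le_one (m : ℕ) : A m ≤ 1 := by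
  induction m with
  | zero => simp [A_zero]
  | succ k ih =>
      have h := A_rec k
      nlinarith [A_nonneg (k+1), A_nonneg k]

noncomputable def uA (m : ℕ) : ℝ := ∑ k ∈ range (m+1), A k * A (m-k)

lemma hreflA (m : ℕ) : (∑ k ∈ range (m+1), ((2*k+1:ℕ):ℝ) * (A k * A (m-k)))
      = ∑ k ∈ range (m+1), ((2*(m-k)+1:ℕ):ℝ) * (A k * A (m-k)) := by
  rw [← Finset.sum_range_reflect (fun j => ((2*(m-j)+1:ℕ):ℝ) * (A j * A (m-j))) (m+1)]
  apply Finset.sum_congr rfl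
  intro k hk
  have hk' : k ≤ m := by simpa [Nat.lt_succ_iff] using hk
  have h1 : m + 1 - 1 - k = m - k := by omega
  have h2 : m - (m - k) = k := by omega
  rw [h1, h2]
  ring

lemma v_eq (m : ℕ) :
    2 * (∑ k ∈ range (m+1), ((2*k+1:ℕ):ℝ) * (A k * A (m-k)))
      = (2*m+2 : ℝ) * uA m := by
  have h2 : 2 * (∑ k ∈ range (m+1), ((2*k+1:ℕ):ℝ) * (A k * A (m-k)))
      = (∑ k ∈ range (m+1), ((2*k+1:ℕ):ℝ) * (A k * A (m-k)))
        + ∑ k ∈ range (m+1), ((2*(m-k)+1:ℕ):ℝ) * (A k * A (m-k)) := by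
    rw [← hreflA]; ring
  rw [h2, ← Finset.sum_add_distrib]
  unfold uA
  rw [Finset.mul_sum]
  apply Finset.sum_congr rfl
  intro k hk
  have hk' : k ≤ m := by simpa [Nat.lt_succ_iff] using hk
  have hc : ((2*k+1:ℕ):ℝ) + ((2*(m-k)+1:ℕ):ℝ) = 2*m+2 := by
    have : (2*k+1) + (2*(m-k)+1) = 2*m+2 := by omega
    exact_mod_cast congrArg (fun x : ℕ => (x:ℝ)) this
  linear_combination hc * (A k * A (m-k))

lemma uA_succ (m : ℕ) : uA (m+1) = uA m := by
  set w := ∑ k ∈ range (m+2), ((2*(m+1-k):ℕ):ℝ) * (A k * A (m+1-k)) with hw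
  have hw1 : w = ∑ k ∈ range (m+1), ((2*(m-k)+1:ℕ):ℝ) * (A k * A (m-k)) := by
    rw [hw, Finset.sum_range_succ]
    simp only [Nat.sub_self, Nat.mul_zero, Nat.cast_zero, zero_mul, add_zero]
    apply Finset.sum_congr rfl
    intro k hk
    have hk' : k ≤ m := by simpa [Nat.lt_succ_iff] using hk
    have h1 : m + 1 - k = (m - k) + 1 := by omega
    rw [h1]
    have h := A_rec (m - k)
    push_cast
    linear_combination (A k) * h
  have hwrefl : w = ∑ k ∈ range (m+2), ((2*k:ℕ):ℝ) * (A k * A (m+1-k)) := by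
    rw [hw, ← Finset.sum_range_reflect (fun j => ((2*j:ℕ):ℝ) * (A j * A (m+1-j))) (m+2)]
    apply Finset.sum_congr rfl
    intro k hk
    have hk' : k ≤ m + 1 := by simpa [Nat.lt_succ_iff] using hk
    have h1 : m + 2 - 1 - k = m + 1 - k := by omega
    have h2 : m + 1 - (m + 1 - k) = k := by omega
    rw [h1, h2]
    ring
  have hsum : 2 * w = (2*m+2 : ℝ) * uA (m+1) := by
    have h2 : 2 * w = w + w := by ring
    rw [h2]
    nth_rewrite 1 [hw]
    rw [hwrefl, ← Finset.sum_add_distrib]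
    unfold uA
    rw [Finset.mul_sum]
    apply Finset.sum_congr rfl
    intro k hk
    have hk' : k ≤ m + 1 := by simpa [Nat.lt_succ_iff] using hk
    have hc : ((2*(m+1-k):ℕ):ℝ) + ((2*k:ℕ):ℝ) = 2*m+2 := by
      have : (2*(m+1-k)) + (2*k) = 2*m+2 := by omega
      exact_mod_cast congrArg (fun x : ℕ => (x:ℝ)) this
    linear_combination hc * (A k * A (m+1-k))
  have hv := v_eq m
  rw [hreflA, ← hw1] at hv
  have hne : (2*(m:ℝ)+2) ≠ 0 := by positivity
  have heq := hsum.symm.trans hv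
  exact mul_left_cancel₀ hne heq

lemma uA_eq_one (m : ℕ) : uA m = 1 := by
  induction m with
  | zero => simp [uA, A_zero]
  | succ k ih => rw [uA_succ, ih]

lemma Ay_nonneg {y : ℝ} (hy0 : 0 ≤ y) (m : ℕ) : 0 ≤ A m * y ^ m :=
  mul_nonneg (A_nonneg m) (pow_nonneg hy0 m)

lemma summable_Ay {y : ℝ} (hy0 : 0 ≤ y) (hy1 : y < 1) :
    Summable (fun m => A m * y ^ m) := by
  apply Summable.of_nonneg_of_le (Ay_nonneg hy0)
    (fun m => ?_) (summable_geometric_of_lt_one hy0 hy1)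
  calc A m * y ^ m ≤ 1 * y ^ m := by
        apply mul_le_mul_of_nonneg_right (A_le_one m) (by positivity)
    _ = y ^ m := one_mul _

lemma tsum_Ay {y : ℝ} (hy0 : 0 ≤ y) (hy1 : y < 1) :
    (∑' m, A m * y ^ m) = 1 / Real.sqrt (1 - y) := by
  set S := ∑' m, A m * y ^ m with hS
  have hsum := summable_Ay hy0 hy1
  have hprod : Summable (fun x : ℕ × ℕ => (A x.1 * y ^ x.1) * (A x.2 * y ^ x.2)) :=
    hsum.mul_of_nonneg hsum (Ay_nonneg hy0) (Ay_nonneg hy0)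
  have hSS : S * S = (1 - y)⁻¹ := by
    rw [hS, hsum.tsum_mul_tsum_eq_tsum_sum_range hsum hprod]
    have hc : ∀ m : ℕ, (∑ k ∈ range (m+1), (A k * y ^ k) * (A (m-k) * y ^ (m-k))) = y ^ m := by
      intro m
      have h2 : ∀ k ∈ range (m+1), (A k * y ^ k) * (A (m-k) * y ^ (m-k))
          = (A k * A (m-k)) * y ^ m := by
        intro k hk
        have hk' : k ≤ m := by simpa [Nat.lt_succ_iff] using hk
        have h3 : y ^ k * y ^ (m - k) = y ^ m := by
          rw [← pow_add]; congr 1; omega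
        linear_combination (A k * A (m-k)) * h3
      rw [Finset.sum_congr rfl h2, ← Finset.sum_mul]
      have : (∑ k ∈ range (m+1), A k * A (m-k)) = 1 := uA_eq_one m
      rw [this, one_mul]
    rw [tsum_congr hc, tsum_geometric_of_lt_one hy0 hy1]
  have hS0 : 0 ≤ S := tsum_nonneg (Ay_nonneg hy0)
  have h1y : 0 < 1 - y := by linarith
  have hfin : Real.sqrt ((1-y)⁻¹) = S := by
    rw [← hSS, Real.sqrt_mul_self hS0]
  rw [← hfin, Real.sqrt_inv, one_div]

end Aux

section Aux2

open Set MeasureTheory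

lemma realBeta_integrable (a : ℝ) (ha : 0 < a) :
    IntegrableOn (fun t : ℝ => t ^ (a-1) * (1-t) ^ (-(1/2):ℝ)) (Ioo 0 1) volume := by
  have hu : 0 < (Complex.ofReal a).re := by simpa using ha
  have hv : (0:ℝ) < (Complex.ofReal (1/2)).re := by norm_num
  have h := (Complex.betaIntegral_convergent (u := (a:ℂ)) (v := ((1/2:ℝ):ℂ)) hu hv).norm
  rw [intervalIntegrable_iff_integrableOn_Ioc_of_le (by norm_num : (0:ℝ) ≤ 1)] at h
  have h' := h.mono_set Ioo_subset_Ioc_self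
  apply h'.congr_fun ?_ measurableSet_Ioo
  intro x hx
  obtain ⟨hx0, hx1⟩ := hx
  have h1x : (0:ℝ) < 1 - x := by linarith
  show ‖(x:ℂ) ^ ((a:ℂ) - 1) * (1 - (x:ℂ)) ^ (((1/2:ℝ):ℂ) - 1)‖ = _
  rw [norm_mul]
  rw [Complex.norm_cpow_eq_rpow_re_of_pos hx0]
  have h2 : (1 - (x:ℂ)) = ((1 - x : ℝ) : ℂ) := by push_cast; ring
  rw [h2, Complex.norm_cpow_eq_rpow_re_of_pos h1x]
  norm_num

lemma realBeta_eval (a : ℝ) (ha : 0 < a) :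
    ∫ t in Ioo (0:ℝ) 1, t ^ (a-1) * (1-t) ^ (-(1/2):ℝ)
      = Real.Gamma a * Real.sqrt π / Real.Gamma (a + 1/2) := by
  have hu : 0 < (Complex.ofReal a).re := by simpa using ha
  have hv : (0:ℝ) < (Complex.ofReal (1/2)).re := by norm_num
  have hbeta := Complex.Gamma_mul_Gamma_eq_betaIntegral hu hv
  have hBval : Complex.betaIntegral (a:ℂ) ((1/2:ℝ):ℂ)
      = ((∫ t in Ioo (0:ℝ) 1, t ^ (a-1) * (1-t) ^ (-(1/2):ℝ) : ℝ) : ℂ) := by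
    rw [Complex.betaIntegral, intervalIntegral.integral_of_le (by norm_num : (0:ℝ) ≤ 1),
      MeasureTheory.integral_Ioc_eq_integral_Ioo]
    calc ∫ t in Ioo (0:ℝ) 1, (t:ℂ) ^ ((a:ℂ) - 1) * (1 - (t:ℂ)) ^ (((1/2:ℝ):ℂ) - 1)
        = ∫ t in Ioo (0:ℝ) 1, ((t ^ (a-1) * (1-t) ^ (-(1/2):ℝ) : ℝ) : ℂ) := by
          apply setIntegral_congr_fun measurableSet_Ioo
          intro x hx
          obtain ⟨hx0, hx1⟩ := hx
          have h1x : (0:ℝ) < 1 - x := by linarith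
          show (x:ℂ) ^ ((a:ℂ) - 1) * (1 - (x:ℂ)) ^ (((1/2:ℝ):ℂ) - 1) = _
          simp only [Complex.ofReal_mul]
          congr 1
          · rw [Complex.ofReal_cpow hx0.le]
            norm_num
          · have h2 : (1 - (x:ℂ)) = ((1 - x : ℝ) : ℂ) := by push_cast; ring
            rw [h2, Complex.ofReal_cpow h1x.le]
            norm_num
      _ = _ := integral_ofReal
  rw [hBval] at hbeta
  rw [show ((a:ℂ) + ((1/2:ℝ):ℂ)) = ((a + 1/2 : ℝ) : ℂ) by push_cast; ring] at hbeta
  rw [Complex.Gamma_ofReal, Complex.Gamma_ofReal, Complex.Gamma_ofReal] at hbeta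
  have hreal : Real.Gamma a * Real.Gamma (1/2)
      = Real.Gamma (a + 1/2) * ∫ t in Ioo (0:ℝ) 1, t ^ (a-1) * (1-t) ^ (-(1/2):ℝ) := by
    exact_mod_cast hbeta
  have hpos : 0 < Real.Gamma (a + 1/2) := Real.Gamma_pos_of_pos (by linarith)
  rw [Real.Gamma_one_half_eq] at hreal
  rw [eq_div_iff hpos.ne']
  linarith [hreal]

noncomputable def cc (n : ℕ) : ℝ := ((2*n : ℕ) : ℝ)⁻¹

lemma cov_all (n p : ℕ) (hn : 1 ≤ n) :
    IntegrableOn (fun x : ℝ => x^p / Real.sqrt (1 - x^(2*n))) (Ioo 0 1) volume ∧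
    ∫ x in Ioo (0:ℝ) 1, x^p / Real.sqrt (1 - x^(2*n))
      = cc n * ∫ t in Ioo (0:ℝ) 1,
          t ^ (((p:ℝ)+1) * cc n - 1) * (1-t) ^ (-(1/2):ℝ) := by
  have h2n : (0:ℝ) < (2*n : ℕ) := by positivity
  have hc : 0 < cc n := by rw [cc]; positivity
  have hc1 : cc n ≤ 1 := by
    rw [cc]
    apply inv_le_one_of_one_le₀
    exact_mod_cast by omega
  set c := cc n with hcdef
  set g := fun x : ℝ => x^p / Real.sqrt (1 - x^(2*n)) with hg
  have hderiv : ∀ t ∈ Ioo (0:ℝ) 1,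
      HasDerivWithinAt (fun x : ℝ => x ^ c) (c * t ^ (c - 1)) (Ioo 0 1) t := by
    intro t ht
    exact (Real.hasDerivAt_rpow_const (Or.inl ht.1.ne')).hasDerivWithinAt
  have hinj : InjOn (fun x : ℝ => x ^ c) (Ioo 0 1) := by
    have : StrictMonoOn (fun x : ℝ => x ^ c) (Ioo 0 1) := by
      intro x hx y hy hxy
      exact Real.rpow_lt_rpow hx.1.le hxy hc
    exact this.injOn
  have himg : (fun x : ℝ => x ^ c) '' (Ioo 0 1) = Ioo 0 1 := by
    ext x
    constructor
    · rintro ⟨t, ⟨ht0, ht1⟩, rfl⟩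
      exact ⟨Real.rpow_pos_of_pos ht0 c, Real.rpow_lt_one ht0.le ht1 hc⟩
    · rintro ⟨hx0, hx1⟩
      refine ⟨x ^ ((2*n : ℕ) : ℝ), ⟨Real.rpow_pos_of_pos hx0 _,
        Real.rpow_lt_one hx0.le hx1 h2n⟩, ?_⟩
      show (x ^ ((2*n : ℕ) : ℝ)) ^ c = x
      rw [← Real.rpow_mul hx0.le]
      rw [hcdef, cc, mul_inv_cancel₀ h2n.ne', Real.rpow_one]
  have hpoint : ∀ t ∈ Ioo (0:ℝ) 1,
      |c * t ^ (c-1)| • g (t ^ c)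
        = c * (t ^ (((p:ℝ)+1) * c - 1) * (1-t) ^ (-(1/2):ℝ)) := by
    intro t ht
    obtain ⟨ht0, ht1⟩ := ht
    have h1t : (0:ℝ) < 1 - t := by linarith
    have habs : |c * t ^ (c-1)| = c * t ^ (c-1) := by
      apply abs_of_pos
      exact mul_pos hc (Real.rpow_pos_of_pos ht0 _)
    have hpow2n : (t ^ c) ^ (2*n) = t := by
      rw [← Real.rpow_natCast (t ^ c) (2*n), ← Real.rpow_mul ht0.le,
        hcdef, cc, inv_mul_cancel₀ (by exact_mod_cast h2n.ne'), Real.rpow_one]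
    have hpowp : (t ^ c) ^ p = t ^ ((p:ℝ) * c) := by
      rw [← Real.rpow_natCast (t ^ c) p, ← Real.rpow_mul ht0.le, mul_comm c]
    have hsqrt : Real.sqrt (1 - t) = (1-t) ^ ((1:ℝ)/2) := Real.sqrt_eq_rpow _
    rw [smul_eq_mul, habs, hg]
    show c * t ^ (c-1) * ((t ^ c) ^ p / Real.sqrt (1 - (t ^ c)^(2*n))) = _
    rw [hpow2n, hpowp, hsqrt, div_eq_mul_inv, ← Real.rpow_neg h1t.le]
    rw [mul_assoc, ← mul_assoc (t ^ (c-1)), ← Real.rpow_add ht0]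
    ring_nf
  have hbase : IntegrableOn (fun t : ℝ => c * (t ^ (((p:ℝ)+1) * c - 1) * (1-t) ^ (-(1/2):ℝ)))
      (Ioo 0 1) volume := (realBeta_integrable (((p:ℝ)+1) * c) (by positivity)).const_mul c
  constructor
  · rw [← himg]
    rw [integrableOn_image_iff_integrableOn_abs_deriv_smul measurableSet_Ioo hderiv hinj g]
    exact hbase.congr_fun (fun t ht => (hpoint t ht).symm) measurableSet_Ioo
  · have hcov := integral_image_eq_integral_abs_deriv_smul measurableSet_Ioo hderiv hinj g
    rw [himg] at hcov
    rw [hcov, ← MeasureTheory.integral_const_mul]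
    exact setIntegral_congr_fun measurableSet_Ioo hpoint

lemma main_sum (n p : ℕ) (hn : 1 ≤ n)
    (hF : IntegrableOn (fun x : ℝ => x^p / Real.sqrt (1 - x^(2*n))) (Ioo 0 1) volume) :
    Summable (fun m : ℕ => A m / ((2*m*n+p : ℕ) + 1 : ℝ)) ∧
    ∑' m : ℕ, A m / ((2*m*n+p : ℕ) + 1 : ℝ)
      = ∫ x in Ioo (0:ℝ) 1, x^p / Real.sqrt (1 - x^(2*n)) := by
  set k := fun m : ℕ => 2*m*n+p with hk
  set term := fun m : ℕ => A m / ((k m : ℝ) + 1) with hterm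
  set F := fun x : ℝ => x^p / Real.sqrt (1 - x^(2*n)) with hFdef
  have hterm_nonneg : ∀ m, 0 ≤ term m := by
    intro m
    apply div_nonneg (A_nonneg m)
    positivity
  have step1 : ∀ m : ℕ, ∫⁻ x in Ioo (0:ℝ) 1, ENNReal.ofReal (A m * x ^ (k m))
      = ENNReal.ofReal (term m) := by
    intro m
    have hcont : Continuous (fun x : ℝ => A m * x ^ (k m)) := by continuity
    have hint : IntegrableOn (fun x : ℝ => A m * x ^ (k m)) (Ioo 0 1) volume :=
      (hcont.integrableOn_Icc (a := 0) (b := 1)).mono_set Ioo_subset_Icc_self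
    rw [← MeasureTheory.ofReal_integral_eq_lintegral_ofReal hint]
    · congr 1
      rw [← MeasureTheory.integral_Ioc_eq_integral_Ioo,
        ← intervalIntegral.integral_of_le (by norm_num : (0:ℝ) ≤ 1)]
      rw [intervalIntegral.integral_const_mul, integral_pow]
      rw [hterm]
      simp
      ring
    · filter_upwards [ae_restrict_mem measurableSet_Ioo] with x hx
      exact mul_nonneg (A_nonneg m) (pow_nonneg hx.1.le _)
  have step2 : ∀ x ∈ Ioo (0:ℝ) 1,
      (∑' m, ENNReal.ofReal (A m * x ^ (k m))) = ENNReal.ofReal (F x) := by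
    intro x hx
    obtain ⟨hx0, hx1⟩ := hx
    set y := x ^ (2*n) with hy
    have hy0 : 0 ≤ y := by positivity
    have hy1 : y < 1 := pow_lt_one₀ hx0.le hx1 (by omega)
    have hre : ∀ m, A m * x ^ (k m) = (A m * y ^ m) * x ^ p := by
      intro m
      show A m * x ^ (2*m*n+p) = (A m * y ^ m) * x ^ p
      have hxe : x ^ (2*m*n+p) = (x^(2*n))^m * x^p := by
        rw [← pow_mul, ← pow_add]
        congr 1
        ring
      rw [hy, hxe]
      ring
    have hsum : Summable (fun m => (A m * y ^ m) * x ^ p) :=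
      (summable_Ay hy0 hy1).mul_right _
    have htsum : (∑' m, (A m * y ^ m) * x ^ p) = F x := by
      rw [tsum_mul_right, tsum_Ay hy0 hy1, hFdef]
      field_simp [hy]
      rw [hy]
    calc (∑' m, ENNReal.ofReal (A m * x ^ (k m)))
        = ∑' m, ENNReal.ofReal ((A m * y ^ m) * x ^ p) := by
          apply tsum_congr; intro m; rw [hre]
      _ = ENNReal.ofReal (∑' m, (A m * y ^ m) * x ^ p) := by
          rw [ENNReal.ofReal_tsum_of_nonneg (fun m => mul_nonneg (mul_nonneg (A_nonneg m)
            (pow_nonneg hy0 m)) (pow_nonneg hx0.le p)) hsum]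
      _ = ENNReal.ofReal (F x) := by rw [htsum]
  have step4 : ∑' m, ENNReal.ofReal (term m)
      = ENNReal.ofReal (∫ x in Ioo (0:ℝ) 1, F x) := by
    calc ∑' m, ENNReal.ofReal (term m)
        = ∑' m, ∫⁻ x in Ioo (0:ℝ) 1, ENNReal.ofReal (A m * x ^ (k m)) := by
          exact (tsum_congr step1).symm
      _ = ∫⁻ x in Ioo (0:ℝ) 1, ∑' m, ENNReal.ofReal (A m * x ^ (k m)) := by
          rw [← MeasureTheory.lintegral_tsum]
          intro m
          apply Measurable.aemeasurable
          apply Measurable.ennreal_ofReal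
          exact (by continuity : Continuous (fun x : ℝ => A m * x ^ (k m))).measurable
      _ = ∫⁻ x in Ioo (0:ℝ) 1, ENNReal.ofReal (F x) := by
          apply lintegral_congr_ae
          filter_upwards [ae_restrict_mem measurableSet_Ioo] with x hx
          exact step2 x hx
      _ = ENNReal.ofReal (∫ x in Ioo (0:ℝ) 1, F x) := by
          rw [← MeasureTheory.ofReal_integral_eq_lintegral_ofReal hF]
          filter_upwards [ae_restrict_mem measurableSet_Ioo] with x hx
          have hx0 := hx.1
          have hx1 := hx.2
          have h1 : 0 < 1 - x^(2*n) := by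
            have : x ^ (2*n) < 1 := pow_lt_one₀ hx0.le hx1 (by omega)
            linarith
          rw [hFdef]
          positivity
  have hne : (∑' m, ENNReal.ofReal (term m)) ≠ ⊤ := by
    rw [step4]; exact ENNReal.ofReal_ne_top
  have hsummable : Summable term := by
    have h := ENNReal.summable_toReal hne
    apply h.congr
    intro m
    exact ENNReal.toReal_ofReal (hterm_nonneg m)
  refine ⟨hsummable, ?_⟩
  have hV : 0 ≤ ∫ x in Ioo (0:ℝ) 1, F x := by
    apply setIntegral_nonneg measurableSet_Ioo
    intro x hx
    have hx0 := hx.1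
    have hx1 := hx.2
    have h1 : 0 < 1 - x^(2*n) := by
      have : x ^ (2*n) < 1 := pow_lt_one₀ hx0.le hx1 (by omega)
      linarith
    rw [hFdef]
    positivity
  calc ∑' m, term m = ∑' m, (ENNReal.ofReal (term m)).toReal := by
        apply tsum_congr; intro m; rw [ENNReal.toReal_ofReal (hterm_nonneg m)]
    _ = (∑' m, ENNReal.ofReal (term m)).toReal :=
        (ENNReal.tsum_toReal_eq (fun m => ENNReal.ofReal_ne_top)).symm
    _ = (ENNReal.ofReal (∫ x in Ioo (0:ℝ) 1, F x)).toReal := by rw [step4]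
    _ = ∫ x in Ioo (0:ℝ) 1, F x := ENNReal.toReal_ofReal hV

lemma sum_formula (n p : ℕ) (hn : 1 ≤ n) :
    ∑' m : ℕ, A m / ((2*m*n+p : ℕ) + 1 : ℝ)
      = cc n * (Real.Gamma (((p:ℝ)+1) * cc n) * Real.sqrt π
          / Real.Gamma (((p:ℝ)+1) * cc n + 1/2)) := by
  obtain ⟨hint, hval⟩ := cov_all n p hn
  obtain ⟨hsummable, htsum⟩ := main_sum n p hn hint
  have hcpos : 0 < cc n := by rw [cc]; positivity
  rw [htsum, hval, realBeta_eval (((p:ℝ)+1) * cc n) (by positivity)]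

lemma tan_id (x : ℝ) (hx0 : 0 < x) (hx6 : x ≤ 1/6) (w : ℝ) (hw : w * x = 1/2 - x) :
    Real.sqrt π * Real.Gamma (3/2 - x) / Real.Gamma (1 - x)
      = w * Real.tan (π * x) * (Real.sqrt π * Real.Gamma (1 + x) / Real.Gamma (1/2 + x)) := by
  have hπ := Real.pi_pos
  have hsinpos : 0 < Real.sin (π * x) := by
    apply Real.sin_pos_of_pos_of_lt_pi (by positivity)
    nlinarith
  have hcospos : 0 < Real.cos (π * x) := by
    apply Real.cos_pos_of_mem_Ioo
    constructor <;> nlinarith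
  have hsin' : Real.Gamma x * Real.Gamma (1 - x) * Real.sin (π * x) = π := by
    rw [Real.Gamma_mul_Gamma_one_sub x]
    field_simp
  have hcos' : Real.Gamma (1/2 + x) * Real.Gamma (1/2 - x) * Real.cos (π * x) = π := by
    have h := Real.Gamma_mul_Gamma_one_sub (1/2 + x)
    rw [show (1 : ℝ) - (1/2 + x) = 1/2 - x by ring] at h
    rw [show π * (1/2 + x) = π * x + π/2 by ring, Real.sin_add_pi_div_two] at h
    rw [h]
    field_simp
  have hG32 : Real.Gamma (3/2 - x) = (1/2 - x) * Real.Gamma (1/2 - x) := by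
    have h := Real.Gamma_add_one (s := 1/2 - x) (by intro h; nlinarith [h])
    rw [show (1/2 - x) + 1 = 3/2 - x by ring] at h
    exact h
  have hG1x : Real.Gamma (1 + x) = x * Real.Gamma x := by
    have h := Real.Gamma_add_one (s := x) hx0.ne'
    rw [add_comm] at h
    exact h
  have hGx : 0 < Real.Gamma x := Real.Gamma_pos_of_pos hx0
  have hG1mx : 0 < Real.Gamma (1 - x) := Real.Gamma_pos_of_pos (by linarith)
  have hGhx : 0 < Real.Gamma (1/2 + x) := Real.Gamma_pos_of_pos (by linarith)
  have hGhmx : 0 < Real.Gamma (1/2 - x) := Real.Gamma_pos_of_pos (by linarith)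
  rw [hG32, hG1x, Real.tan_eq_sin_div_cos]
  set G1 := Real.Gamma x
  set G2 := Real.Gamma (1 - x)
  set G3 := Real.Gamma (1/2 + x)
  set G4 := Real.Gamma (1/2 - x)
  set s := Real.sin (π * x)
  set co := Real.cos (π * x)
  set r := Real.sqrt π
  field_simp
  linear_combination (r*(1/2-x)*G2*2 + r*(G2-1)*(2*x-1))*hcos' + (-(r*w*x*2))*hsin' + (-(r*π*2))*hw

end Aux2

theorem stmt_2 (n : ℕ) (hn : 3 ≤ n) :
    (∑' m : ℕ, c n m) = Real.sqrt π * Real.Gamma (1 + 1 / (2 * n)) / Real.Gamma (1 / 2 + 1 / (2 * n)) ∧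
    (∑' m : ℕ, c n m) = K n ∧
    (∑' m : ℕ, d n m) = Real.sqrt π * Real.Gamma (3 / 2 - 1 / (2 * n)) / Real.Gamma (1 - 1 / (2 * n)) ∧
    (∑' m : ℕ, d n m) = ((n : ℝ) - 1) * Real.tan (π / (2 * n)) * K n := by
  have hn1 : 1 ≤ n := by omega
  have hnR : (3:ℝ) ≤ n := by exact_mod_cast hn
  have h2nR : (0:ℝ) < 2 * n := by linarith
  set x := 1 / (2 * (n:ℝ)) with hxdef
  have hx0 : 0 < x := by rw [hxdef]; positivity
  have hx6 : x ≤ 1/6 := by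
    rw [hxdef, div_le_div_iff₀ h2nR (by norm_num)]
    linarith
  have hccx : cc n = x := by
    rw [cc, hxdef, one_div]
    push_cast
    ring_nf
  -- First sum
  have hc_eq : ∀ m : ℕ, c n m = A m / (((2*m*n+0 : ℕ) : ℝ) + 1) := by
    intro m
    rw [c]
    congr 1
    push_cast
    ring
  have hsum0 := sum_formula n 0 hn1
  rw [← tsum_congr hc_eq] at hsum0
  norm_num at hsum0
  have hG1 : Real.Gamma (1 + x) = x * Real.Gamma x := by
    have h := Real.Gamma_add_one (s := x) hx0.ne'
    rw [add_comm] at h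
    exact h
  have goal1 : (∑' m : ℕ, c n m)
      = Real.sqrt π * Real.Gamma (1 + 1 / (2 * (n:ℝ))) / Real.Gamma (1 / 2 + 1 / (2 * (n:ℝ))) := by
    rw [hsum0, hccx]
    rw [show (1:ℝ) / (2 * (n:ℝ)) = x from hxdef.symm]
    rw [hG1, show (1:ℝ)/2 + x = x + 1/2 by ring]
    ring
  -- Second sum
  have hb : (((n-2:ℕ):ℝ)+1) * cc n = 1/2 - x := by
    have hcast : ((n-2:ℕ):ℝ) = (n:ℝ) - 2 := by
      have : (2:ℕ) ≤ n := by omega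
      push_cast [this]
      ring
    rw [hcast, hccx, hxdef]
    field_simp
    ring
  have hw : ((n:ℝ)-1) * x = 1/2 - x := by
    rw [hxdef]
    field_simp
  have hGhmx : (1:ℝ)/2 - x ≠ 0 := by
    have : x ≤ 1/6 := hx6
    intro h
    nlinarith
  have hG32 : Real.Gamma (3/2 - x) = (1/2 - x) * Real.Gamma (1/2 - x) := by
    have h := Real.Gamma_add_one (s := 1/2 - x) hGhmx
    rw [show (1/2 - x) + 1 = 3/2 - x by ring] at h
    exact h
  have hd : ∀ m : ℕ, d n m = ((n:ℝ)-1) * (A m / (((2*m*n+(n-2) : ℕ) : ℝ) + 1)) := by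
    intro m
    rw [d]
    have hden : (((2*m*n+(n-2):ℕ):ℝ)) + 1 = (n:ℝ)*(2*(m:ℝ)+1) - 1 := by
      have h2 : (2:ℕ) ≤ n := by omega
      push_cast [h2]
      ring
    rw [hden]
    ring
  have hsum2 : (∑' m : ℕ, d n m)
      = ((n:ℝ) - 1) * ∑' m : ℕ, A m / (((2*m*n+(n-2) : ℕ) : ℝ) + 1) := by
    rw [← tsum_mul_left]
    exact tsum_congr hd
  have goal3 : (∑' m : ℕ, d n m)
      = Real.sqrt π * Real.Gamma (3/2 - x) / Real.Gamma (1 - x) := by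
    rw [hsum2, sum_formula n (n-2) hn1, hb, hccx, hG32]
    rw [show (1:ℝ)/2 - x + 1/2 = 1 - x by ring]
    have h1 : ((n:ℝ) - 1) * (x * (Real.Gamma (1/2 - x) * Real.sqrt π / Real.Gamma (1 - x)))
        = (((n:ℝ) - 1) * x) * (Real.Gamma (1/2 - x) * Real.sqrt π / Real.Gamma (1 - x)) := by
      ring
    rw [h1, hw]
    ring
  have goal4 : (∑' m : ℕ, d n m)
      = ((n:ℝ) - 1) * Real.tan (π * x)
          * (Real.sqrt π * Real.Gamma (1 + x) / Real.Gamma (1/2 + x)) := by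
    rw [goal3]
    exact tan_id x hx0 hx6 ((n:ℝ)-1) hw
  refine ⟨goal1, ?_, goal3, ?_⟩
  · rw [goal1, K]
  · rw [goal4, K]
    have hπx : π / (2 * (n:ℝ)) = π * x := by
      rw [hxdef]
      ring
    rw [hπx]
end

section
/- For every β ∈ ℝ and every complex z with |z| ≤ 1: (i) f_β(z) = e^{−i(π/2 + π/n)} · f_{β+π}(e^{iπ/n} z), so the image f_{β+π}(U) is a rotation of f_β(U); and (ii) f_β(conj z) = conj(f_{−β}(z)). -/
open Real

noncomputable def ω (n : ℕ) : ℂ := Complex.exp (Complex.I * ((π / n : ℝ) : ℂ))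

lemma omega_ne_zero (n : ℕ) : ω n ≠ 0 := Complex.exp_ne_zero _

lemma omega_norm (n : ℕ) : ‖ω n‖ = 1 := by
  rw [ω, Complex.norm_exp]
  simp

lemma omega_conj (n : ℕ) : (starRingEnd ℂ) (ω n) = (ω n)⁻¹ := by
  rw [ω, ← Complex.exp_conj, ← Complex.exp_neg]
  congr 1
  simp [Complex.ext_iff]

lemma omega_pow_n (n : ℕ) (hn : n ≠ 0) : ω n ^ n = -1 := by
  rw [ω, ← Complex.exp_nat_mul, ← Complex.exp_pi_mul_I]
  congr 1
  have : (n : ℂ) ≠ 0 := Nat.cast_ne_zero.mpr hn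
  push_cast
  field_simp

lemma omega_pow_2n (n : ℕ) (hn : n ≠ 0) : ω n ^ (2 * n) = 1 := by
  rw [mul_comm, pow_mul, omega_pow_n n hn]
  norm_num

lemma omega_pow_h (n : ℕ) (hn : n ≠ 0) (m : ℕ) : ω n ^ (2 * m * n + 1) = ω n := by
  have : 2 * m * n = 2 * n * m := by ring
  rw [pow_add, this, pow_mul, omega_pow_2n n hn, one_pow, pow_one, one_mul]

lemma omega_pow_g (n : ℕ) (hn : n ≠ 0) (m : ℕ) :
    ω n ^ (2 * m * n + n - 1) = -(ω n)⁻¹ := by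
  have h1 : (1 : ℕ) ≤ 2 * m * n + n := by omega
  rw [pow_sub₀ _ (omega_ne_zero n) h1, pow_add]
  have : 2 * m * n = 2 * n * m := by ring
  rw [this, pow_mul, omega_pow_2n n hn, one_pow, one_mul, omega_pow_n n hn, pow_one]
  field_simp

lemma hh_rot (n : ℕ) (hn : n ≠ 0) (z : ℂ) : hh n (ω n * z) = ω n * hh n z := by
  unfold hh
  rw [← tsum_mul_left]
  exact tsum_congr fun m => by rw [mul_pow, omega_pow_h n hn]; ring

lemma gg_rot (n : ℕ) (hn : n ≠ 0) (z : ℂ) : gg n (ω n * z) = -(ω n)⁻¹ * gg n z := by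
  unfold gg
  have key : ∑' m : ℕ, (d n m : ℂ) * (ω n * z) ^ (2 * m * n + n - 1)
      = ∑' m : ℕ, -(ω n)⁻¹ * ((d n m : ℂ) * z ^ (2 * m * n + n - 1)) :=
    tsum_congr fun m => by rw [mul_pow, omega_pow_g n hn]; ring
  rw [key, tsum_mul_left]
  ring

lemma hh_conj (n : ℕ) (z : ℂ) : hh n ((starRingEnd ℂ) z) = (starRingEnd ℂ) (hh n z) := by
  unfold hh
  rw [show ((starRingEnd ℂ) (∑' m : ℕ, (c n m : ℂ) * z ^ (2 * m * n + 1)))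
      = star (∑' m : ℕ, (c n m : ℂ) * z ^ (2 * m * n + 1)) from rfl, tsum_star]
  exact tsum_congr fun m => by
    rw [show star ((c n m : ℂ) * z ^ (2 * m * n + 1)) = star (c n m : ℂ) * star z ^ (2 * m * n + 1)
      from by rw [star_mul', star_pow]]
    simp [Complex.conj_ofReal]

lemma gg_conj (n : ℕ) (z : ℂ) : gg n ((starRingEnd ℂ) z) = (starRingEnd ℂ) (gg n z) := by
  unfold gg
  rw [map_mul, show ((starRingEnd ℂ) (∑' m : ℕ, (d n m : ℂ) * z ^ (2 * m * n + n - 1)))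
      = star (∑' m : ℕ, (d n m : ℂ) * z ^ (2 * m * n + n - 1)) from rfl, tsum_star]
  congr 1
  · simp
  · exact tsum_congr fun m => by
      rw [show star ((d n m : ℂ) * z ^ (2 * m * n + n - 1))
        = star (d n m : ℂ) * star z ^ (2 * m * n + n - 1) from by rw [star_mul', star_pow]]
      simp [Complex.conj_ofReal]

lemma exp_pi_div_two_sq :
    Complex.exp (Complex.I * ((π / 2 : ℝ) : ℂ)) * Complex.exp (Complex.I * ((π / 2 : ℝ) : ℂ))
      = -1 := by
  rw [← Complex.exp_add, ← Complex.exp_pi_mul_I]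
  congr 1
  push_cast
  ring

lemma f_rot (n : ℕ) (hn : n ≠ 0) (β : ℝ) (z : ℂ) :
    f n (β + π) (ω n * z) = Complex.exp (Complex.I * ((π / 2 + π / n : ℝ) : ℂ)) * f n β z := by
  unfold f
  rw [hh_rot n hn, gg_rot n hn]
  have hsplit : Complex.exp (Complex.I * ((β + π : ℝ) : ℂ) / 2)
      = Complex.exp (Complex.I * (β : ℂ) / 2) * Complex.exp (Complex.I * ((π / 2 : ℝ) : ℂ)) := by
    rw [← Complex.exp_add]; congr 1; push_cast; ring
  have hsplit2 : Complex.exp (Complex.I * ((π / 2 + π / n : ℝ) : ℂ))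
      = Complex.exp (Complex.I * ((π / 2 : ℝ) : ℂ)) * ω n := by
    rw [ω, ← Complex.exp_add]; congr 1; push_cast; ring
  rw [hsplit2, map_mul, map_neg, map_inv₀, omega_conj, inv_inv,
    Complex.exp_neg, Complex.exp_neg, hsplit, mul_inv]
  set P := Complex.exp (Complex.I * ((π / 2 : ℝ) : ℂ)) with hP
  set E := Complex.exp (Complex.I * (β : ℂ) / 2) with hE
  have hPne : P ≠ 0 := Complex.exp_ne_zero _
  have hEne : E ≠ 0 := Complex.exp_ne_zero _
  have hP2 : P * P = -1 := exp_pi_div_two_sq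
  field_simp
  linear_combination (-(ω n * (starRingEnd ℂ) (gg n z))) * hP2

lemma f_conj (n : ℕ) (β : ℝ) (z : ℂ) :
    f n β ((starRingEnd ℂ) z) = (starRingEnd ℂ) (f n (-β) z) := by
  unfold f
  rw [hh_conj, gg_conj, map_add, map_mul, map_mul, ← Complex.exp_conj, ← Complex.exp_conj]
  have h1 : (starRingEnd ℂ) (Complex.I * ((-β : ℝ) : ℂ) / 2) = Complex.I * (β : ℂ) / 2 := by
    rw [map_div₀, map_mul, Complex.conj_I, Complex.conj_ofReal, map_ofNat]
    push_cast
    ring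
  have h2 : (starRingEnd ℂ) (-(Complex.I * ((-β : ℝ) : ℂ) / 2)) = -(Complex.I * (β : ℂ) / 2) := by
    rw [map_neg, h1]
  rw [h1, h2, Complex.conj_conj]

theorem stmt_7 (n : ℕ) (hn : 3 ≤ n) (β : ℝ) :
    (∀ z : ℂ, ‖z‖ ≤ 1 →
      f n β z = Complex.exp (-(Complex.I * ((π / 2 + π / n : ℝ) : ℂ))) *
          f n (β + π) (Complex.exp (Complex.I * ((π / n : ℝ) : ℂ)) * z) ∧
      f n β ((starRingEnd ℂ) z) = (starRingEnd ℂ) (f n (-β) z)) ∧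
    f n (β + π) '' Metric.ball 0 1
      = (fun w => Complex.exp (Complex.I * ((π / 2 + π / n : ℝ) : ℂ)) * w) ''
          (f n β '' Metric.ball 0 1) := by
  have hn0 : n ≠ 0 := by omega
  constructor
  · intro z _
    refine ⟨?_, f_conj n β z⟩
    have h := f_rot n hn0 β z
    show f n β z = Complex.exp (-(Complex.I * ((π / 2 + π / n : ℝ) : ℂ))) * f n (β + π) (ω n * z)
    rw [h, ← mul_assoc, ← Complex.exp_add, neg_add_cancel, Complex.exp_zero, one_mul]
  · ext w
    simp only [Set.mem_image]
    constructor
    · rintro ⟨z, hz, rfl⟩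
      refine ⟨f n β ((ω n)⁻¹ * z), ⟨(ω n)⁻¹ * z, ?_, rfl⟩, ?_⟩
      · rw [mem_ball_zero_iff] at hz ⊢
        rw [norm_mul, norm_inv, omega_norm]
        simpa using hz
      · rw [← f_rot n hn0 β, ← mul_assoc, mul_inv_cancel₀ (omega_ne_zero n), one_mul]
    · rintro ⟨w', ⟨z, hz, rfl⟩, rfl⟩
      refine ⟨ω n * z, ?_, f_rot n hn0 β z⟩
      rw [mem_ball_zero_iff] at hz ⊢
      rw [norm_mul, omega_norm, one_mul]
      exact hz
end

section
/- Let η = π/(2n) − π/4 and γ = −π/(2n). Then for every complex z with |z| ≤ 1, e^{iη} f_{π/2}(e^{iγ} · conj z) = conj(e^{iη} f_{π/2}(e^{iγ} z)). Hence if z and z′ are reflections of one another in the line arg z = γ, then f_{π/2}(z) and f_{π/2}(z′) are reflections of one another in the line arg z = −η, so the image f_{π/2}(U) has reflectional symmetry. -/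
open Real

noncomputable def ee (x : ℝ) : ℂ := Complex.exp (Complex.I * x)

lemma ee_mul (x y : ℝ) : ee x * ee y = ee (x + y) := by
  rw [ee, ee, ee, ← Complex.exp_add]; congr 1; push_cast; ring

lemma ee_pow (x : ℝ) (k : ℕ) : ee x ^ k = ee (k * x) := by
  rw [ee, ee, ← Complex.exp_nat_mul]; congr 1; push_cast; ring

lemma ee_conj (x : ℝ) : (starRingEnd ℂ) (ee x) = ee (-x) := by
  rw [ee, ee, ← Complex.exp_conj]; congr 1; simp

lemma ee_pi (m : ℕ) : ee (-(π * m)) = ee (π * m) := by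
  have h : ee (π * m) = ee (-(π * m)) * ee (2 * π * m) := by
    rw [ee_mul]; congr 1; ring
  have h2 : ee (2 * π * m) = 1 := by
    rw [ee, show Complex.I * ((2 * π * m : ℝ) : ℂ) = (m : ℤ) * (2 * π * Complex.I) by push_cast; ring]
    exact Complex.exp_int_mul_two_pi_mul_I m
  rw [h, h2, mul_one]

lemma L1 (n : ℕ) (hn : 3 ≤ n) (z : ℂ) :
    ee (π/(2*n) - π/4) * ee (π/4) * hh n (ee (-(π/(2*n))) * (starRingEnd ℂ) z)
      = ee (-(π/(2*n) - π/4)) * ee (-(π/4)) * (starRingEnd ℂ) (hh n (ee (-(π/(2*n))) * z)) := by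
  have hn0 : (n:ℝ) ≠ 0 := by
    have : 0 < n := by omega
    positivity
  unfold hh
  simp only [starRingEnd_apply]
  rw [tsum_star]
  rw [← tsum_mul_left, ← tsum_mul_left]
  refine tsum_congr fun m => ?_
  have h1 : 1 ≤ 2 * m * n + 1 := by omega
  simp only [← starRingEnd_apply, map_mul, map_pow, Complex.conj_ofReal, ee_conj, mul_pow,
    ee_pow, mul_neg, neg_neg]
  have hX : (π/(2*n) - π/4) + π/4 + -(((2 * m * n + 1 : ℕ):ℝ) * (π/(2*n))) = -(π * m) := by
    push_cast
    field_simp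
    ring
  have e1 : ee (π/(2*n) - π/4) * ee (π/4) * ee (-(((2 * m * n + 1 : ℕ):ℝ) * (π/(2*n)))) = ee (-(π * m)) := by
    rw [ee_mul, ee_mul, hX]
  have e2 : ee (-(π/(2*n) - π/4)) * ee (-(π/4)) * ee (((2 * m * n + 1 : ℕ):ℝ) * (π/(2*n))) = ee (π * m) := by
    rw [ee_mul, ee_mul]
    congr 1
    linear_combination -hX
  have hp := ee_pi m
  linear_combination ((c n m : ℂ) * (starRingEnd ℂ) z ^ (2 * m * n + 1)) * (e1 - e2 + hp)

lemma L2 (n : ℕ) (hn : 3 ≤ n) (z : ℂ) :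
    ee (π/(2*n) - π/4) * ee (-(π/4)) * (starRingEnd ℂ) (gg n (ee (-(π/(2*n))) * (starRingEnd ℂ) z))
      = ee (-(π/(2*n) - π/4)) * ee (π/4) * gg n (ee (-(π/(2*n))) * z) := by
  have hn0 : (n:ℝ) ≠ 0 := by
    have : 0 < n := by omega
    positivity
  unfold gg
  rw [map_mul]
  rw [show (starRingEnd ℂ) (1 / ((n:ℂ) - 1)) = 1 / ((n:ℂ) - 1) by
    simp [map_div₀]]
  simp only [starRingEnd_apply]
  rw [tsum_star]
  have hts : (∑' m : ℕ, ee (π/(2*n) - π/4) * ee (-(π/4)) *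
        star ((d n m : ℂ) * (ee (-(π/(2*n))) * star z) ^ (2 * m * n + n - 1)))
      = ∑' m : ℕ, ee (-(π/(2*n) - π/4)) * ee (π/4) *
        ((d n m : ℂ) * (ee (-(π/(2*n))) * z) ^ (2 * m * n + n - 1)) := by
    refine tsum_congr fun m => ?_
    simp only [← starRingEnd_apply, map_mul, map_pow, Complex.conj_ofReal, ee_conj, mul_pow,
      ee_pow, mul_neg, neg_neg, Complex.conj_conj]
    have hk : ((2 * m * n + n - 1 : ℕ):ℝ) = 2*m*n + n - 1 := by
      rw [Nat.cast_sub (by omega : 1 ≤ 2*m*n+n)]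
      push_cast
      ring
    have hX : (π/(2*n) - π/4) + (-(π/4)) + ((2 * m * n + n - 1 : ℕ):ℝ) * (π/(2*n)) = π * m := by
      rw [hk]
      field_simp
      ring
    have e1 : ee (π/(2*n) - π/4) * ee (-(π/4)) * ee (((2 * m * n + n - 1 : ℕ):ℝ) * (π/(2*n)))
        = ee (π * m) := by
      rw [ee_mul, ee_mul, hX]
    have e2 : ee (-(π/(2*n) - π/4)) * ee (π/4) * ee (-(((2 * m * n + n - 1 : ℕ):ℝ) * (π/(2*n))))
        = ee (-(π * m)) := by
      rw [ee_mul, ee_mul]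
      congr 1
      linear_combination -hX
    have hp := ee_pi m
    linear_combination ((d n m : ℂ) * z ^ (2 * m * n + n - 1)) * (e1 - e2 - hp)
  rw [tsum_mul_left] at hts
  rw [tsum_mul_left] at hts
  calc ee (π/(2*n) - π/4) * ee (-(π/4)) * (1 / ((n:ℂ) - 1) *
        ∑' m : ℕ, star ((d n m : ℂ) * (ee (-(π/(2*n))) * star z) ^ (2 * m * n + n - 1)))
      = (1 / ((n:ℂ) - 1)) * (ee (π/(2*n) - π/4) * ee (-(π/4)) *
        ∑' m : ℕ, star ((d n m : ℂ) * (ee (-(π/(2*n))) * star z) ^ (2 * m * n + n - 1))) := by ring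
    _ = (1 / ((n:ℂ) - 1)) * (ee (-(π/(2*n) - π/4)) * ee (π/4) *
        ∑' m : ℕ, ((d n m : ℂ) * (ee (-(π/(2*n))) * z) ^ (2 * m * n + n - 1))) := by rw [hts]
    _ = _ := by ring

lemma ee_abs (x : ℝ) : ‖ee x‖ = 1 := by
  rw [ee, mul_comm]
  exact Complex.norm_exp_ofReal_mul_I x

lemma key (n : ℕ) (hn : 3 ≤ n) (z : ℂ) :
    ee (π/(2*n) - π/4) * f n (π/2) (ee (-(π/(2*n))) * (starRingEnd ℂ) z)
      = (starRingEnd ℂ) (ee (π/(2*n) - π/4) * f n (π/2) (ee (-(π/(2*n))) * z)) := by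
  have ea : Complex.exp (Complex.I * ((π/2 : ℝ):ℂ) / 2) = ee (π/4) := by
    rw [ee]; congr 1; push_cast; ring
  have eb : Complex.exp (-(Complex.I * ((π/2 : ℝ):ℂ) / 2)) = ee (-(π/4)) := by
    rw [ee]; congr 1; push_cast; ring
  unfold f
  rw [ea, eb]
  simp only [map_add, map_mul, ee_conj, Complex.conj_conj, neg_neg]
  linear_combination L1 n hn z + L2 n hn z

theorem stmt_9 (n : ℕ) (hn : 3 ≤ n) :
    (∀ z : ℂ, ‖z‖ ≤ 1 →
      Complex.exp (Complex.I * ((π / (2 * n) - π / 4 : ℝ) : ℂ)) *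
          f n (π / 2) (Complex.exp (Complex.I * ((-(π / (2 * n)) : ℝ) : ℂ)) * (starRingEnd ℂ) z)
        = (starRingEnd ℂ)
            (Complex.exp (Complex.I * ((π / (2 * n) - π / 4 : ℝ) : ℂ)) *
              f n (π / 2) (Complex.exp (Complex.I * ((-(π / (2 * n)) : ℝ) : ℂ)) * z))) ∧
    (starRingEnd ℂ) ''
        ((fun w => Complex.exp (Complex.I * ((π / (2 * n) - π / 4 : ℝ) : ℂ)) * w) ''
          (f n (π / 2) '' Metric.ball 0 1))
      = (fun w => Complex.exp (Complex.I * ((π / (2 * n) - π / 4 : ℝ) : ℂ)) * w) ''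
          (f n (π / 2) '' Metric.ball 0 1) := by
  constructor
  · exact fun z _ => key n hn z
  · have P : ∀ w ∈ (fun w => ee (π / (2 * n) - π / 4) * w) '' (f n (π / 2) '' Metric.ball 0 1),
        (starRingEnd ℂ) w ∈
          (fun w => ee (π / (2 * n) - π / 4) * w) '' (f n (π / 2) '' Metric.ball 0 1) := by
      rintro w ⟨u, ⟨v, hv, rfl⟩, rfl⟩
      set z : ℂ := ee (-(-(π/(2*n)))) * v with hz
      have hvz : ee (-(π/(2*n))) * z = v := by
        rw [hz, ← mul_assoc, ee_mul]
        simp [ee]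
      have habs : ‖(starRingEnd ℂ) z‖ < 1 := by
        have : ‖z‖ = ‖v‖ := by
          rw [hz, norm_mul, ee_abs, one_mul]
        simpa [this] using (by simpa using hv : ‖v‖ < 1)
      refine ⟨f n (π/2) (ee (-(π/(2*n))) * (starRingEnd ℂ) z),
        ⟨ee (-(π/(2*n))) * (starRingEnd ℂ) z, ?_, rfl⟩, ?_⟩
      · simpa [norm_mul, ee_abs] using habs
      · have := (key n hn z).symm
        rw [hvz] at this
        exact this.symm
    apply Set.Subset.antisymm
    · rintro w ⟨u, hu, rfl⟩
      exact P u hu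
    · intro w hw
      exact ⟨(starRingEnd ℂ) w, P w hw, Complex.conj_conj w⟩
end
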